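/- (Completeness via logic programming) If ⊩ φ (φ is supported in every base of the Sandqvist basis), then ⊢ φ in NJ. The proof factors as: ⊩ φ implies ⊩_N φ implies T^ω I_⊥, N ⊨ φ^♭ implies N ⊢ φ^♭ (operationally) implies ⊢ φ. -/

import Mathlib

/-! ## hereditary Harrop fragment -/

inductive Atm : Type
  | bot : Atm
  | at_ : ℕ → Atm

mutual
  inductive Df : Type
    | atom : Atm → Df
    | imp : Gf → Atm → Df
    | and : Df → Df → Df
  inductive Gf : Type
    | atom : Atm → Gf
    | dimp : Df → Gf → Gf
    | and : Gf → Gf → Gf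
    | or : Gf → Gf → Gf
end

noncomputable instance : DecidableEq Df := Classical.decEq _
noncomputable instance : DecidableEq Atm := Classical.decEq _

/-- A program is a finite set of definite formulae. -/
abbrev Program := Finset Df

/-- `[P]` : closure of a program under decomposing conjunctions. -/
inductive InClos (P : Program) : Df → Prop
  | mem {d} : d ∈ P → InClos P d
  | andl {d₁ d₂} : InClos P (Df.and d₁ d₂) → InClos P d₁
  | andr {d₁ d₂} : InClos P (Df.and d₁ d₂) → InClos P d₂

/-- An interpretation: a monotone map from programs to sets of atoms. -/
structure Interp where
  val : Program → Set Atm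
  mono : ∀ {P Q : Program}, P ⊆ Q → val P ⊆ val Q

/-- Pointwise order on interpretations. -/
def Interp.le (I J : Interp) : Prop := ∀ P, I.val P ⊆ J.val P

/-- Satisfaction `I, P ⊨ G`. -/
def sat (I : Interp) : Program → Gf → Prop
  | P, Gf.atom a => a ∈ I.val P
  | P, Gf.dimp d g => sat I (insert d P) g
  | P, Gf.and g₁ g₂ => sat I P g₁ ∧ sat I P g₂
  | P, Gf.or g₁ g₂ => sat I P g₁ ∨ sat I P g₂

theorem InClos.mono' {P Q : Program} (h : P ⊆ Q) : ∀ {d}, InClos P d → InClos Q d := by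
  intro d hd
  induction hd with
  | mem hm => exact InClos.mem (h hm)
  | andl _ ih => exact InClos.andl ih
  | andr _ ih => exact InClos.andr ih

theorem sat_mono (I : Interp) : ∀ (g : Gf) {P Q : Program}, P ⊆ Q → sat I P g → sat I Q g
  | Gf.atom _, _, _, h, hs => I.mono h hs
  | Gf.dimp d g, _, _, h, hs => sat_mono I g (Finset.insert_subset_insert d h) hs
  | Gf.and g₁ g₂, _, _, h, hs => ⟨sat_mono I g₁ h hs.1, sat_mono I g₂ h hs.2⟩
  | Gf.or g₁ g₂, _, _, h, hs =>
      hs.elim (fun x => Or.inl (sat_mono I g₁ h x)) (fun x => Or.inr (sat_mono I g₂ h x))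

/-- The raw unfolding operator. -/
def Traw (I : Interp) (P : Program) : Set Atm :=
  {a | InClos P (Df.atom a)} ∪
  {a | ∃ g, InClos P (Df.imp g a) ∧ sat I P g} ∪
  {a | sat I P (Gf.atom Atm.bot)}

/-- `T` maps interpretations to interpretations. -/
def T (I : Interp) : Interp := by
  refine ⟨Traw I, ?_⟩
  intro P Q h a ha
  simp only [Traw, Set.mem_union, Set.mem_setOf_eq] at ha ⊢
  rcases ha with (h1 | ⟨g, hg, hs⟩) | h3
  · exact Or.inl (Or.inl (InClos.mono' h h1))
  · exact Or.inl (Or.inr ⟨g, InClos.mono' h hg, sat_mono I _ h hs⟩)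
  · exact Or.inr (sat_mono I _ h h3)

/-- The bottom interpretation. -/
def Ibot : Interp := ⟨fun _ => ∅, fun _ => Set.Subset.refl _⟩

/-- Iterates of `T` from the bottom interpretation. -/
def Tn : ℕ → Interp
  | 0 => Ibot
  | n + 1 => T (Tn n)

/-- `T^ω I_⊥`, the least fixed point of `T`. -/
def Tomega : Interp :=
  ⟨fun P => ⋃ n, (Tn n).val P, fun h => Set.iUnion_mono fun n => (Tn n).mono h⟩

/-- The pointwise supremum of a family of interpretations. -/
def chainSup (I : ℕ → Interp) : Interp :=
  ⟨fun P => ⋃ n, (I n).val P, fun h => Set.iUnion_mono fun n => (I n).mono h⟩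

/-- Operational semantics for hHLP. -/
inductive Exec : Program → Gf → Prop
  | inn {P a} : InClos P (Df.atom a) → Exec P (Gf.atom a)
  | clause {P g a} : InClos P (Df.imp g a) → Exec P g → Exec P (Gf.atom a)
  | efq {P g} : Exec P (Gf.atom Atm.bot) → Exec P g
  | orl {P g₁ g₂} : Exec P g₁ → Exec P (Gf.or g₁ g₂)
  | orr {P g₁ g₂} : Exec P g₂ → Exec P (Gf.or g₁ g₂)
  | and {P g₁ g₂} : Exec P g₁ → Exec P g₂ → Exec P (Gf.and g₁ g₂)
  | load {P d g} : Exec (insert d P) g → Exec P (Gf.dimp d g)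

/-! ## Formulae of IPL and natural deduction NJ -/

inductive Fml : Type
  | atom : ℕ → Fml
  | bot : Fml
  | and : Fml → Fml → Fml
  | or : Fml → Fml → Fml
  | imp : Fml → Fml → Fml

/-- Gentzen's natural deduction system NJ for IPL. -/
inductive NJ : Set Fml → Fml → Prop
  | ax {Γ φ} : φ ∈ Γ → NJ Γ φ
  | andI {Γ φ ψ} : NJ Γ φ → NJ Γ ψ → NJ Γ (Fml.and φ ψ)
  | andE1 {Γ φ ψ} : NJ Γ (Fml.and φ ψ) → NJ Γ φ
  | andE2 {Γ φ ψ} : NJ Γ (Fml.and φ ψ) → NJ Γ ψ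
  | orI1 {Γ φ ψ} : NJ Γ φ → NJ Γ (Fml.or φ ψ)
  | orI2 {Γ φ ψ} : NJ Γ ψ → NJ Γ (Fml.or φ ψ)
  | orE {Γ φ ψ χ} : NJ Γ (Fml.or φ ψ) → NJ (insert φ Γ) χ → NJ (insert ψ Γ) χ → NJ Γ χ
  | impI {Γ φ ψ} : NJ (insert φ Γ) ψ → NJ Γ (Fml.imp φ ψ)
  | impE {Γ φ ψ} : NJ Γ (Fml.imp φ ψ) → NJ Γ φ → NJ Γ ψ
  | botE {Γ φ} : NJ Γ Fml.bot → NJ Γ φ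

def Atm.toFml : Atm → Fml
  | Atm.bot => Fml.bot
  | Atm.at_ n => Fml.atom n

mutual
  def Df.toFml : Df → Fml
    | Df.atom a => a.toFml
    | Df.imp g a => Fml.imp g.toFml a.toFml
    | Df.and d₁ d₂ => Fml.and d₁.toFml d₂.toFml
  def Gf.toFml : Gf → Fml
    | Gf.atom a => a.toFml
    | Gf.dimp d g => Fml.imp d.toFml g.toFml
    | Gf.and g₁ g₂ => Fml.and g₁.toFml g₂.toFml
    | Gf.or g₁ g₂ => Fml.or g₁.toFml g₂.toFml
end

/-! ## Base-extension semantics -/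

/-- A (properly second-level) atomic rule: premisses are pairs of a finite set of
dischargeable atoms and an atomic conclusion; the conclusion is an atom. -/
structure ARule where
  prems : List (Finset ℕ × ℕ)
  concl : ℕ

/-- Derivability of an atom from a set of atoms in an atomic system. -/
inductive Deriv (B : Set ARule) : Set ℕ → ℕ → Prop
  | hyp {S p} : p ∈ S → Deriv B S p
  | app {S} {r : ARule} : r ∈ B →
      (∀ pr ∈ r.prems, Deriv B (S ∪ ↑pr.1) pr.2) → Deriv B S r.concl

/-- Sandqvist's support relation `⊩_B φ` (over the basis of all second-level
atomic systems). -/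
def Supp : Set ARule → Fml → Prop
  | B, Fml.atom n => Deriv B ∅ n
  | B, Fml.bot => ∀ n : ℕ, Deriv B ∅ n
  | B, Fml.and φ ψ => Supp B φ ∧ Supp B ψ
  | B, Fml.imp φ ψ => ∀ C, B ⊆ C → Supp C φ → Supp C ψ
  | B, Fml.or φ ψ => ∀ C, B ⊆ C → ∀ p : ℕ,
      (∀ D, C ⊆ D → Supp D φ → Deriv D ∅ p) →
      (∀ D, C ⊆ D → Supp D ψ → Deriv D ∅ p) → Deriv C ∅ p

/-- Support with open assumptions: `Γ ⊩_B φ`. -/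
def SuppCtx (B : Set ARule) (Γ : Set Fml) (φ : Fml) : Prop :=
  ∀ C, B ⊆ C → (∀ ψ ∈ Γ, Supp C ψ) → Supp C φ

/-! ## The bespoke base `N` -/

/-- Atoms occurring in a formula. -/
def atomsIn : Fml → Set ℕ
  | Fml.atom n => {n}
  | Fml.bot => ∅
  | Fml.and φ ψ => atomsIn φ ∪ atomsIn ψ
  | Fml.or φ ψ => atomsIn φ ∪ atomsIn ψ
  | Fml.imp φ ψ => atomsIn φ ∪ atomsIn ψ

/-- A flattening map `♭` is good for a set `S` of formulae if it is injective,
the identity on atoms, and assigns fresh atoms to non-atomic formulae of `S`. -/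
def FlatGood (fl : Fml → ℕ) (S : Set Fml) : Prop :=
  Function.Injective fl ∧ (∀ n, fl (Fml.atom n) = n) ∧
  (∀ φ ∈ S, (∀ n, φ ≠ Fml.atom n) → ∀ ψ ∈ S, fl φ ∉ atomsIn ψ)

/-- `S` is closed under subformulae. -/
def SubClosed (S : Set Fml) : Prop :=
  (∀ φ ψ, Fml.and φ ψ ∈ S → φ ∈ S ∧ ψ ∈ S) ∧
  (∀ φ ψ, Fml.or φ ψ ∈ S → φ ∈ S ∧ ψ ∈ S) ∧
  (∀ φ ψ, Fml.imp φ ψ ∈ S → φ ∈ S ∧ ψ ∈ S)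

/-- The rules of the bespoke base `N` emulating NJ via flattened atoms, for the
formulae occurring in `S`. -/
inductive NRule (fl : Fml → ℕ) (S : Set Fml) : ARule → Prop
  | andI {φ ψ} : Fml.and φ ψ ∈ S →
      NRule fl S ⟨[(∅, fl φ), (∅, fl ψ)], fl (Fml.and φ ψ)⟩
  | andE1 {φ ψ} : Fml.and φ ψ ∈ S →
      NRule fl S ⟨[(∅, fl (Fml.and φ ψ))], fl φ⟩
  | andE2 {φ ψ} : Fml.and φ ψ ∈ S →
      NRule fl S ⟨[(∅, fl (Fml.and φ ψ))], fl ψ⟩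
  | orI1 {φ ψ} : Fml.or φ ψ ∈ S →
      NRule fl S ⟨[(∅, fl φ)], fl (Fml.or φ ψ)⟩
  | orI2 {φ ψ} : Fml.or φ ψ ∈ S →
      NRule fl S ⟨[(∅, fl ψ)], fl (Fml.or φ ψ)⟩
  | orE {φ ψ χ} : Fml.or φ ψ ∈ S → χ ∈ S →
      NRule fl S ⟨[(∅, fl (Fml.or φ ψ)), ({fl φ}, fl χ), ({fl ψ}, fl χ)], fl χ⟩
  | impI {φ ψ} : Fml.imp φ ψ ∈ S →
      NRule fl S ⟨[({fl φ}, fl ψ)], fl (Fml.imp φ ψ)⟩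
  | impE {φ ψ} : Fml.imp φ ψ ∈ S →
      NRule fl S ⟨[(∅, fl φ), (∅, fl (Fml.imp φ ψ))], fl ψ⟩
  | botE {φ} : φ ∈ S →
      NRule fl S ⟨[(∅, fl Fml.bot)], fl φ⟩

/-! ## Encoding atomic systems as formulae / programs -/

def conjAtoms : ℕ → List ℕ → Fml
  | a, [] => Fml.atom a
  | a, b :: l => Fml.and (Fml.atom a) (conjAtoms b l)

noncomputable def encPrem (pr : Finset ℕ × ℕ) : Fml :=
  match pr.1.toList with
  | [] => Fml.atom pr.2
  | a :: l => Fml.imp (conjAtoms a l) (Fml.atom pr.2)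

def conjFrm : Fml → List Fml → Fml
  | f, [] => f
  | f, g :: l => Fml.and f (conjFrm g l)

/-- Encoding `⌊-⌋` of a second-level atomic rule as a formula of IPL. -/
noncomputable def encRule (r : ARule) : Fml :=
  match r.prems with
  | [] => Fml.atom r.concl
  | q :: qs => Fml.imp (conjFrm (encPrem q) (qs.map encPrem)) (Fml.atom r.concl)

def conjD : Df → List Df → Df
  | d, [] => d
  | d, e :: l => Df.and d (conjD e l)

def conjG : Gf → List Gf → Gf
  | g, [] => g
  | g, h :: l => Gf.and g (conjG h l)

noncomputable def encPremG (pr : Finset ℕ × ℕ) : Gf :=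
  match pr.1.toList with
  | [] => Gf.atom (Atm.at_ pr.2)
  | a :: l =>
      Gf.dimp (conjD (Df.atom (Atm.at_ a)) (l.map fun n => Df.atom (Atm.at_ n)))
        (Gf.atom (Atm.at_ pr.2))

/-- Encoding of a second-level atomic rule as a definite formula. -/
noncomputable def encRuleD (r : ARule) : Df :=
  match r.prems with
  | [] => Df.atom (Atm.at_ r.concl)
  | q :: qs => Df.imp (conjG (encPremG q) (qs.map encPremG)) (Atm.at_ r.concl)
/-! ## Auxiliary development for completeness -/

inductive SubF : Fml → Fml → Prop
  | refl (φ) : SubF φ φ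
  | andL {ψ α β} : SubF ψ α → SubF ψ (Fml.and α β)
  | andR {ψ α β} : SubF ψ β → SubF ψ (Fml.and α β)
  | orL {ψ α β} : SubF ψ α → SubF ψ (Fml.or α β)
  | orR {ψ α β} : SubF ψ β → SubF ψ (Fml.or α β)
  | impL {ψ α β} : SubF ψ α → SubF ψ (Fml.imp α β)
  | impR {ψ α β} : SubF ψ β → SubF ψ (Fml.imp α β)

theorem SubF.trans' {a b c : Fml} (h1 : SubF a b) (h2 : SubF b c) : SubF a c := by
  induction h2 with
  | refl => exact h1
  | andL _ ih => exact SubF.andL ih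
  | andR _ ih => exact SubF.andR ih
  | orL _ ih => exact SubF.orL ih
  | orR _ ih => exact SubF.orR ih
  | impL _ ih => exact SubF.impL ih
  | impR _ ih => exact SubF.impR ih


theorem atomsIn_sub {ψ φ : Fml} (h : SubF ψ φ) : atomsIn ψ ⊆ atomsIn φ := by
  induction h with
  | refl => exact Set.Subset.refl _
  | andL _ ih => exact ih.trans (by simp [atomsIn])
  | andR _ ih => exact ih.trans (by simp [atomsIn])
  | orL _ ih => exact ih.trans (by simp [atomsIn])
  | orR _ ih => exact ih.trans (by simp [atomsIn])
  | impL _ ih => exact ih.trans (by simp [atomsIn])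
  | impR _ ih => exact ih.trans (by simp [atomsIn])

def maxAtom : Fml → ℕ
  | Fml.atom n => n + 1
  | Fml.bot => 0
  | Fml.and φ ψ => max (maxAtom φ) (maxAtom ψ)
  | Fml.or φ ψ => max (maxAtom φ) (maxAtom ψ)
  | Fml.imp φ ψ => max (maxAtom φ) (maxAtom ψ)

theorem lt_maxAtom {n : ℕ} {φ : Fml} (h : n ∈ atomsIn φ) : n < maxAtom φ := by
  induction φ with
  | atom m => simp [atomsIn] at h; simp [maxAtom]; omega
  | bot => simp [atomsIn] at h
  | and a b iha ihb =>
    simp only [atomsIn, Set.mem_union] at h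
    simp only [maxAtom, lt_max_iff]
    tauto
  | or a b iha ihb =>
    simp only [atomsIn, Set.mem_union] at h
    simp only [maxAtom, lt_max_iff]
    tauto
  | imp a b iha ihb =>
    simp only [atomsIn, Set.mem_union] at h
    simp only [maxAtom, lt_max_iff]
    tauto

def encF : Fml → ℕ
  | Fml.atom n => Nat.pair 0 n
  | Fml.bot => Nat.pair 1 0
  | Fml.and a b => Nat.pair 2 (Nat.pair (encF a) (encF b))
  | Fml.or a b => Nat.pair 3 (Nat.pair (encF a) (encF b))
  | Fml.imp a b => Nat.pair 4 (Nat.pair (encF a) (encF b))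

theorem encF_inj : ∀ a b : Fml, encF a = encF b → a = b := by
  intro a
  induction a with
  | atom n => intro b h; cases b <;> simp [encF, Nat.pair_eq_pair] at h <;> simp [h]
  | bot => intro b h; cases b <;> simp_all [encF, Nat.pair_eq_pair]
  | and x y ihx ihy =>
    intro b h; cases b <;> simp [encF, Nat.pair_eq_pair] at h
    · exact by rw [ihx _ h.1, ihy _ h.2]
  | or x y ihx ihy =>
    intro b h; cases b <;> simp [encF, Nat.pair_eq_pair] at h
    · exact by rw [ihx _ h.1, ihy _ h.2]
  | imp x y ihx ihy =>
    intro b h; cases b <;> simp [encF, Nat.pair_eq_pair] at h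
    · exact by rw [ihx _ h.1, ihy _ h.2]


/-- The flattening: atoms map to themselves, composite formulae to fresh atoms. -/
def flf (φ : Fml) (ψ : Fml) : ℕ :=
  match ψ with
  | Fml.atom n => n
  | _ => maxAtom φ + encF ψ

theorem flf_nonatom {φ ψ : Fml} (h : ∀ n, ψ ≠ Fml.atom n) :
    flf φ ψ = maxAtom φ + encF ψ := by
  cases ψ with
  | atom n => exact absurd rfl (h n)
  | bot => rfl
  | and a b => rfl
  | or a b => rfl
  | imp a b => rfl

open Classical in
/-- Decoding of atoms back to formulae. -/
noncomputable def decF (φ : Fml) (p : ℕ) : Fml :=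
  if h : ∃ ψ, SubF ψ φ ∧ (∀ n, ψ ≠ Fml.atom n) ∧ flf φ ψ = p then h.choose
  else Fml.atom p

theorem decF_flf {φ ψ : Fml} (hs : SubF ψ φ) : decF φ (flf φ ψ) = ψ := by
  unfold decF
  by_cases hat : ∃ n, ψ = Fml.atom n
  · obtain ⟨n, rfl⟩ := hat
    rw [dif_neg]
    · rfl
    · rintro ⟨ξ, hξs, hξna, hξeq⟩
      have h1 : flf φ ξ = maxAtom φ + encF ξ := flf_nonatom hξna
      have hn : n < maxAtom φ := lt_maxAtom (atomsIn_sub hs (by simp [atomsIn]))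
      have h2 : flf φ (Fml.atom n) = n := rfl
      omega
  · push_neg at hat
    have hex : ∃ ξ, SubF ξ φ ∧ (∀ n, ξ ≠ Fml.atom n) ∧ flf φ ξ = flf φ ψ :=
      ⟨ψ, hs, hat, rfl⟩
    rw [dif_pos hex]
    obtain ⟨h1, h2, h3⟩ := hex.choose_spec
    have h4 : flf φ hex.choose = maxAtom φ + encF hex.choose := flf_nonatom h2
    have h5 : flf φ ψ = maxAtom φ + encF ψ := flf_nonatom hat
    exact encF_inj _ _ (by omega)

/-- The bespoke base for φ. -/
inductive BRule (φ : Fml) : ARule → Prop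
  | andI {α β} : SubF (Fml.and α β) φ →
      BRule φ ⟨[(∅, flf φ α), (∅, flf φ β)], flf φ (Fml.and α β)⟩
  | andE1 {α β} : SubF (Fml.and α β) φ →
      BRule φ ⟨[(∅, flf φ (Fml.and α β))], flf φ α⟩
  | andE2 {α β} : SubF (Fml.and α β) φ →
      BRule φ ⟨[(∅, flf φ (Fml.and α β))], flf φ β⟩
  | orI1 {α β} : SubF (Fml.or α β) φ →
      BRule φ ⟨[(∅, flf φ α)], flf φ (Fml.or α β)⟩
  | orI2 {α β} : SubF (Fml.or α β) φ →
      BRule φ ⟨[(∅, flf φ β)], flf φ (Fml.or α β)⟩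
  | orE {α β} (p : ℕ) : SubF (Fml.or α β) φ →
      BRule φ ⟨[(∅, flf φ (Fml.or α β)), ({flf φ α}, p), ({flf φ β}, p)], p⟩
  | impI {α β} : SubF (Fml.imp α β) φ →
      BRule φ ⟨[({flf φ α}, flf φ β)], flf φ (Fml.imp α β)⟩
  | impE {α β} : SubF (Fml.imp α β) φ →
      BRule φ ⟨[(∅, flf φ α), (∅, flf φ (Fml.imp α β))], flf φ β⟩
  | botE (p : ℕ) : SubF Fml.bot φ →
      BRule φ ⟨[(∅, flf φ Fml.bot)], p⟩

theorem Deriv.monoB {B B' : Set ARule} (hBB : B ⊆ B') :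
    ∀ {S p}, Deriv B S p → Deriv B' S p := by
  intro S p h
  induction h with
  | hyp hm => exact Deriv.hyp hm
  | app hr _ ih => exact Deriv.app (hBB hr) ih

theorem Deriv.monoS {B : Set ARule} :
    ∀ {S S' : Set ℕ} {p}, S ⊆ S' → Deriv B S p → Deriv B S' p := by
  intro S S' p hss h
  induction h generalizing S' with
  | hyp hm => exact Deriv.hyp (hss hm)
  | app hr _ ih =>
    exact Deriv.app hr fun pr hpr =>
      ih pr hpr (Set.union_subset_union_left _ hss)

/-- Deduction for atomic derivability. -/
theorem Deriv.deduct {B : Set ARule} {a : ℕ} :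
    ∀ {S p}, Deriv (B ∪ {⟨[], a⟩}) S p → Deriv B (S ∪ {a}) p := by
  intro S p h
  induction h with
  | hyp hm => exact Deriv.hyp (Or.inl hm)
  | @app S r hr hprem ih =>
    rcases hr with hr | hr
    · refine Deriv.app hr fun pr hpr => Deriv.monoS ?_ (ih pr hpr)
      intro x hx
      simp only [Set.mem_union, Set.mem_singleton_iff] at hx ⊢
      tauto
    · have : r = ⟨[], a⟩ := hr
      subst this
      exact Deriv.hyp (Or.inr rfl)

theorem Deriv.ofAxiom {B : Set ARule} {a : ℕ} {S : Set ℕ} :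
    Deriv (B ∪ {⟨[], a⟩}) S a :=
  Deriv.app (r := ⟨[], a⟩) (Or.inr rfl) (by intro pr hpr; cases hpr)

/-- Decoding lemma: atomic derivability in the bespoke base yields NJ. -/
theorem deriv_nj {φ : Fml} :
    ∀ {A p}, Deriv {r | BRule φ r} A p → NJ (decF φ '' A) (decF φ p) := by
  intro A p h
  induction h with
  | hyp hm => exact NJ.ax ⟨_, hm, rfl⟩
  | @app S r hr hprem ih =>
    cases hr with
    | @andI α β hs =>
      have h1 := ih (∅, flf φ α) (by simp)
      have h2 := ih (∅, flf φ β) (by simp)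
      simp only [Finset.coe_empty, Set.union_empty] at h1 h2
      rw [decF_flf (SubF.trans' (SubF.andL (SubF.refl α)) hs)] at h1
      rw [decF_flf (SubF.trans' (SubF.andR (SubF.refl β)) hs)] at h2
      rw [decF_flf hs]
      exact NJ.andI h1 h2
    | @andE1 α β hs =>
      have h1 := ih (∅, flf φ (Fml.and α β)) (by simp)
      simp only [Finset.coe_empty, Set.union_empty] at h1
      rw [decF_flf hs] at h1
      rw [decF_flf (SubF.trans' (SubF.andL (SubF.refl α)) hs)]
      exact NJ.andE1 h1
    | @andE2 α β hs =>
      have h1 := ih (∅, flf φ (Fml.and α β)) (by simp)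
      simp only [Finset.coe_empty, Set.union_empty] at h1
      rw [decF_flf hs] at h1
      rw [decF_flf (SubF.trans' (SubF.andR (SubF.refl β)) hs)]
      exact NJ.andE2 h1
    | @orI1 α β hs =>
      have h1 := ih (∅, flf φ α) (by simp)
      simp only [Finset.coe_empty, Set.union_empty] at h1
      rw [decF_flf (SubF.trans' (SubF.orL (SubF.refl α)) hs)] at h1
      rw [decF_flf hs]
      exact NJ.orI1 h1
    | @orI2 α β hs =>
      have h1 := ih (∅, flf φ β) (by simp)
      simp only [Finset.coe_empty, Set.union_empty] at h1
      rw [decF_flf (SubF.trans' (SubF.orR (SubF.refl β)) hs)] at h1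
      rw [decF_flf hs]
      exact NJ.orI2 h1
    | @orE α β q hs =>
      have h0 := ih (∅, flf φ (Fml.or α β)) (by simp)
      have h1 := ih ({flf φ α}, q) (by simp)
      have h2 := ih ({flf φ β}, q) (by simp)
      simp only [Finset.coe_empty, Set.union_empty, Finset.coe_singleton,
        Set.union_singleton, Set.image_insert_eq] at h0 h1 h2
      rw [decF_flf hs] at h0
      rw [decF_flf (SubF.trans' (SubF.orL (SubF.refl α)) hs)] at h1
      rw [decF_flf (SubF.trans' (SubF.orR (SubF.refl β)) hs)] at h2
      exact NJ.orE h0 h1 h2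
    | @impI α β hs =>
      have h1 := ih ({flf φ α}, flf φ β) (by simp)
      simp only [Finset.coe_singleton, Set.union_singleton, Set.image_insert_eq] at h1
      rw [decF_flf (SubF.trans' (SubF.impL (SubF.refl α)) hs)] at h1
      rw [decF_flf (SubF.trans' (SubF.impR (SubF.refl β)) hs)] at h1
      rw [decF_flf hs]
      exact NJ.impI h1
    | @impE α β hs =>
      have h1 := ih (∅, flf φ α) (by simp)
      have h2 := ih (∅, flf φ (Fml.imp α β)) (by simp)
      simp only [Finset.coe_empty, Set.union_empty] at h1 h2
      rw [decF_flf (SubF.trans' (SubF.impL (SubF.refl α)) hs)] at h1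
      rw [decF_flf hs] at h2
      rw [decF_flf (SubF.trans' (SubF.impR (SubF.refl β)) hs)]
      exact NJ.impE h2 h1
    | @botE q hs =>
      have h1 := ih (∅, flf φ Fml.bot) (by simp)
      simp only [Finset.coe_empty, Set.union_empty] at h1
      rw [decF_flf hs] at h1
      exact NJ.botE h1

/-- Emulation lemma. -/
theorem emul (φ : Fml) :
    ∀ ψ, SubF ψ φ → ∀ C : Set ARule, {r | BRule φ r} ⊆ C →
      (Supp C ψ ↔ Deriv C ∅ (flf φ ψ)) := by
  intro ψ
  induction ψ with
  | atom n => intro _ C _; exact Iff.rfl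
  | bot =>
    intro hs C hC
    constructor
    · intro h; exact h (flf φ Fml.bot)
    · intro h n
      refine Deriv.app (hC (BRule.botE n hs)) ?_
      intro pr hpr
      simp only [List.mem_singleton] at hpr
      subst hpr
      simpa using h
  | and α β ihα ihβ =>
    intro hs C hC
    have hsα : SubF α φ := SubF.trans' (SubF.andL (SubF.refl α)) hs
    have hsβ : SubF β φ := SubF.trans' (SubF.andR (SubF.refl β)) hs
    constructor
    · rintro ⟨h1, h2⟩
      refine Deriv.app (hC (BRule.andI hs)) ?_
      intro pr hpr
      simp only [List.mem_cons, List.mem_singleton, List.not_mem_nil, or_false] at hpr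
      rcases hpr with rfl | rfl
      · simpa using (ihα hsα C hC).1 h1
      · simpa using (ihβ hsβ C hC).1 h2
    · intro h
      constructor
      · refine (ihα hsα C hC).2 ?_
        refine Deriv.app (hC (BRule.andE1 hs)) ?_
        intro pr hpr
        simp only [List.mem_singleton] at hpr
        subst hpr
        simpa using h
      · refine (ihβ hsβ C hC).2 ?_
        refine Deriv.app (hC (BRule.andE2 hs)) ?_
        intro pr hpr
        simp only [List.mem_singleton] at hpr
        subst hpr
        simpa using h
  | or α β ihα ihβ =>
    intro hs C hC
    have hsα : SubF α φ := SubF.trans' (SubF.orL (SubF.refl α)) hs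
    have hsβ : SubF β φ := SubF.trans' (SubF.orR (SubF.refl β)) hs
    constructor
    · intro h
      refine h C (Set.Subset.refl _) (flf φ (Fml.or α β)) ?_ ?_
      · intro D hCD hsupp
        have hD : {r | BRule φ r} ⊆ D := hC.trans hCD
        have h1 := (ihα hsα D hD).1 hsupp
        refine Deriv.app (hD (BRule.orI1 hs)) ?_
        intro pr hpr
        simp only [List.mem_singleton] at hpr
        subst hpr
        simpa using h1
      · intro D hCD hsupp
        have hD : {r | BRule φ r} ⊆ D := hC.trans hCD
        have h1 := (ihβ hsβ D hD).1 hsupp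
        refine Deriv.app (hD (BRule.orI2 hs)) ?_
        intro pr hpr
        simp only [List.mem_singleton] at hpr
        subst hpr
        simpa using h1
    · intro h D hCD p ha hb
      have hD : {r | BRule φ r} ⊆ D := hC.trans hCD
      refine Deriv.app (hD (BRule.orE p hs)) ?_
      intro pr hpr
      simp only [List.mem_cons, List.mem_singleton, List.not_mem_nil, or_false] at hpr
      rcases hpr with rfl | rfl | rfl
      · simpa using Deriv.monoB hCD h
      · have hax : Deriv (D ∪ {⟨[], flf φ α⟩}) ∅ (flf φ α) := Deriv.ofAxiom
        have hsupp : Supp (D ∪ {⟨[], flf φ α⟩}) α :=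
          (ihα hsα _ (hD.trans Set.subset_union_left)).2 hax
        have hp := ha _ Set.subset_union_left hsupp
        have := Deriv.deduct hp
        simpa using this
      · have hax : Deriv (D ∪ {⟨[], flf φ β⟩}) ∅ (flf φ β) := Deriv.ofAxiom
        have hsupp : Supp (D ∪ {⟨[], flf φ β⟩}) β :=
          (ihβ hsβ _ (hD.trans Set.subset_union_left)).2 hax
        have hp := hb _ Set.subset_union_left hsupp
        have := Deriv.deduct hp
        simpa using this
  | imp α β ihα ihβ =>
    intro hs C hC
    have hsα : SubF α φ := SubF.trans' (SubF.impL (SubF.refl α)) hs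
    have hsβ : SubF β φ := SubF.trans' (SubF.impR (SubF.refl β)) hs
    constructor
    · intro h
      set C' : Set ARule := C ∪ {⟨[], flf φ α⟩} with hC'
      have hCC' : C ⊆ C' := Set.subset_union_left
      have hD : {r | BRule φ r} ⊆ C' := hC.trans hCC'
      have hax : Deriv C' ∅ (flf φ α) := Deriv.ofAxiom
      have hsupp : Supp C' α := (ihα hsα C' hD).2 hax
      have hβ : Supp C' β := h C' hCC' hsupp
      have hd : Deriv C' ∅ (flf φ β) := (ihβ hsβ C' hD).1 hβ
      have hd2 := Deriv.deduct hd
      refine Deriv.app (hC (BRule.impI hs)) ?_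
      intro pr hpr
      simp only [List.mem_singleton] at hpr
      subst hpr
      simpa using hd2
    · intro h D hCD hsupp
      have hD : {r | BRule φ r} ⊆ D := hC.trans hCD
      have h1 : Deriv D ∅ (flf φ α) := (ihα hsα D hD).1 hsupp
      have h2 : Deriv D ∅ (flf φ (Fml.imp α β)) := Deriv.monoB hCD h
      refine (ihβ hsβ D hD).2 ?_
      refine Deriv.app (hD (BRule.impE hs)) ?_
      intro pr hpr
      simp only [List.mem_cons, List.mem_singleton, List.not_mem_nil, or_false] at hpr
      rcases hpr with rfl | rfl
      · simpa using h1
      · simpa using h2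


/-- completeness via logic programming: if `⊩ φ` (φ is
supported in every base of the Sandqvist basis) then `⊢ φ` in NJ. -/

theorem completeness_via_LP (φ : Fml) (h : ∀ B : Set ARule, Supp B φ) :
    NJ ∅ φ := by
  have hφ := h {r | BRule φ r}
  have hd : Deriv {r | BRule φ r} ∅ (flf φ φ) :=
    (emul φ φ (SubF.refl φ) _ (Set.Subset.refl _)).1 hφ
  have hnj := deriv_nj hd
  rw [Set.image_empty, decF_flf (SubF.refl φ)] at hnj
  exact hnj
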